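/- Let A be a 2×2 real matrix with trace A < 0 and det A > 0. Then the linear system x'(t) = A·x(t) is globally asymptotically stable: every differentiable solution x : ℝ → ℝ² of x'(t) = A·x(t) satisfies x(t) → 0 as t → +∞. -/

import Mathlib

set_option maxHeartbeats 1000000 in
/-- Routh–Hurwitz criterion for the linearization of the SIS model about the endemic
equilibrium: a planar linear system `x' = A x` with `trace A < 0` and `det A > 0` is
globally asymptotically stable. -/
theorem planar_linear_trace_det_asymptotically_stable
    (A : Matrix (Fin 2) (Fin 2) ℝ) (htr : A.trace < 0) (hdet : 0 < A.det) :
    ∀ x : ℝ → Fin 2 → ℝ,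
      (∀ t : ℝ, HasDerivAt x (A.mulVec (x t)) t) →
      Filter.Tendsto x Filter.atTop (nhds 0) := by
  intro x hx
  set a := A 0 0 with ha
  set b := A 0 1 with hb
  set c := A 1 0 with hc
  set d := A 1 1 with hd
  have hτ : a + d < 0 := by
    have := htr; rwa [Matrix.trace_fin_two] at this
  have hδ : 0 < a * d - b * c := by
    have := hdet; rwa [Matrix.det_fin_two] at this
  set δ := a * d - b * c with hδdef
  set m := a ^ 2 + b ^ 2 + c ^ 2 + d ^ 2 with hm
  have h2δm : 2 * δ ≤ m := by nlinarith [sq_nonneg (a - d), sq_nonneg (b + c)]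
  have hmpos : 0 < m := by linarith
  have hδm : δ ≤ m := by linarith
  have hcpos : 0 < m * (δ + m) := mul_pos hmpos (by linarith)
  set k := -(2 * (a + d)) * δ ^ 2 / (m * (δ + m)) with hk
  have hkpos : 0 < k := by
    apply div_pos _ hcpos
    have h : 0 < -(2 * (a + d)) := by linarith
    positivity
  -- component derivatives
  have hxa : ∀ t, HasDerivAt (fun s => x s 0) (a * x t 0 + b * x t 1) t := by
    intro t
    have := (hasDerivAt_pi.1 (hx t)) 0
    simpa [Matrix.mulVec, dotProduct, Fin.sum_univ_two, ha, hb] using this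
  have hxb : ∀ t, HasDerivAt (fun s => x s 1) (c * x t 0 + d * x t 1) t := by
    intro t
    have := (hasDerivAt_pi.1 (hx t)) 1
    simpa [Matrix.mulVec, dotProduct, Fin.sum_univ_two, hc, hd] using this
  set u : ℝ → ℝ := fun t => a * x t 0 + b * x t 1 with hu
  set w : ℝ → ℝ := fun t => c * x t 0 + d * x t 1 with hw
  have hu' : ∀ t, HasDerivAt u (a * u t + b * w t) t := by
    intro t
    exact ((hxa t).const_mul a).add ((hxb t).const_mul b)
  have hw' : ∀ t, HasDerivAt w (c * u t + d * w t) t := by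
    intro t
    exact ((hxa t).const_mul c).add ((hxb t).const_mul d)
  set V : ℝ → ℝ := fun t => δ * ((x t 0) ^ 2 + (x t 1) ^ 2) + (u t) ^ 2 + (w t) ^ 2
    with hV
  have hV' : ∀ t, HasDerivAt V (2 * (a + d) * ((u t) ^ 2 + (w t) ^ 2)) t := by
    intro t
    have h1 := ((((hxa t).pow 2).add ((hxb t).pow 2)).const_mul δ |>.add
        ((hu' t).pow 2)).add ((hw' t).pow 2)
    refine h1.congr_deriv ?_
    simp only [hu, hw, hδdef]
    push_cast
    ring
  have hVnonneg : ∀ t, 0 ≤ V t := by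
    intro t
    have h1 : 0 ≤ δ * ((x t 0) ^ 2 + (x t 1) ^ 2) := by positivity
    have h2 : 0 ≤ (u t) ^ 2 := sq_nonneg _
    have h3 : 0 ≤ (w t) ^ 2 := sq_nonneg _
    simp only [hV]
    linarith
  -- key inequality : δ^2 V ≤ m (δ+m) (u^2+w^2)
  have hkey : ∀ t, δ ^ 2 * V t ≤ m * (δ + m) * ((u t) ^ 2 + (w t) ^ 2) := by
    intro t
    have hda : δ * x t 0 = d * u t - b * w t := by simp only [hu, hw, hδdef]; ring
    have hdb : δ * x t 1 = a * w t - c * u t := by simp only [hu, hw, hδdef]; ring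
    have hPnn : 0 ≤ (u t) ^ 2 + (w t) ^ 2 := by positivity
    have fact1 : δ ^ 2 * ((x t 0) ^ 2 + (x t 1) ^ 2) ≤ m * ((u t) ^ 2 + (w t) ^ 2) := by
      have e1 : (δ * x t 0) ^ 2 = (d * u t - b * w t) ^ 2 := by rw [hda]
      have e2 : (δ * x t 1) ^ 2 = (a * w t - c * u t) ^ 2 := by rw [hdb]
      nlinarith [sq_nonneg (d * w t + b * u t), sq_nonneg (a * u t + c * w t)]
    have h2 : δ * (δ ^ 2 * ((x t 0) ^ 2 + (x t 1) ^ 2)) ≤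
        δ * (m * ((u t) ^ 2 + (w t) ^ 2)) := mul_le_mul_of_nonneg_left fact1 hδ.le
    have h3 : δ ^ 2 * ((u t) ^ 2 + (w t) ^ 2) ≤ m ^ 2 * ((u t) ^ 2 + (w t) ^ 2) :=
      mul_le_mul_of_nonneg_right (by nlinarith) hPnn
    simp only [hV]
    nlinarith [h2, h3]
  -- g = V * exp(k t) is antitone
  set g : ℝ → ℝ := fun t => V t * Real.exp (k * t) with hg
  have hg' : ∀ t, HasDerivAt g
      (2 * (a + d) * ((u t) ^ 2 + (w t) ^ 2) * Real.exp (k * t)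
        + V t * (Real.exp (k * t) * k)) t := by
    intro t
    have h2 : HasDerivAt (fun s : ℝ => Real.exp (k * s)) (Real.exp (k * t) * k) t := by
      simpa using ((hasDerivAt_id t).const_mul k).exp
    exact (hV' t).mul h2
  have hganti : Antitone g := by
    apply antitone_of_deriv_nonpos (fun t => (hg' t).differentiableAt)
    intro t
    rw [(hg' t).deriv]
    have hE : 0 < Real.exp (k * t) := Real.exp_pos _
    have hτ' : (0:ℝ) ≤ -(2 * (a + d)) := by linarith
    have hVk : V t * k ≤ -(2 * (a + d)) * ((u t) ^ 2 + (w t) ^ 2) := by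
      rw [hk, mul_comm (V t), div_mul_eq_mul_div, div_le_iff₀ hcpos]
      nlinarith [mul_le_mul_of_nonneg_left (hkey t) hτ']
    have hmain : 2 * (a + d) * ((u t) ^ 2 + (w t) ^ 2) + V t * k ≤ 0 := by linarith
    calc 2 * (a + d) * ((u t) ^ 2 + (w t) ^ 2) * Real.exp (k * t)
          + V t * (Real.exp (k * t) * k)
        = (2 * (a + d) * ((u t) ^ 2 + (w t) ^ 2) + V t * k) * Real.exp (k * t) := by ring
      _ ≤ 0 * Real.exp (k * t) := mul_le_mul_of_nonneg_right hmain hE.le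
      _ = 0 := by ring
  -- V tends to 0
  have hVbound : ∀ t : ℝ, 0 ≤ t → V t ≤ g 0 * Real.exp (-(k * t)) := by
    intro t ht
    have h1 : g t ≤ g 0 := hganti ht
    have hEq : V t = g t * Real.exp (-(k * t)) := by
      simp only [hg]
      rw [mul_assoc, ← Real.exp_add]
      simp
    rw [hEq]
    exact mul_le_mul_of_nonneg_right h1 (Real.exp_pos _).le
  have hVtend : Filter.Tendsto V Filter.atTop (nhds 0) := by
    have h1 : Filter.Tendsto (fun t : ℝ => k * t) Filter.atTop Filter.atTop :=
      Filter.Tendsto.const_mul_atTop hkpos Filter.tendsto_id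
    have h2 : Filter.Tendsto (fun t : ℝ => Real.exp (-(k * t))) Filter.atTop (nhds 0) := by
      simpa [Function.comp_def] using Real.tendsto_exp_neg_atTop_nhds_zero.comp h1
    have hup : Filter.Tendsto (fun t => g 0 * Real.exp (-(k * t))) Filter.atTop (nhds 0) := by
      simpa using h2.const_mul (g 0)
    apply tendsto_of_tendsto_of_tendsto_of_le_of_le' tendsto_const_nhds hup
    · exact Filter.Eventually.of_forall hVnonneg
    · filter_upwards [Filter.eventually_ge_atTop (0:ℝ)] with t ht using hVbound t ht
  -- components tend to 0
  have hcomp : ∀ i : Fin 2, Filter.Tendsto (fun t => x t i) Filter.atTop (nhds 0) := by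
    intro i
    have hsq : Filter.Tendsto (fun t => (x t i) ^ 2) Filter.atTop (nhds 0) := by
      have hupf : Filter.Tendsto (fun t => δ⁻¹ * V t) Filter.atTop (nhds 0) := by
        simpa using hVtend.const_mul δ⁻¹
      apply tendsto_of_tendsto_of_tendsto_of_le_of_le' tendsto_const_nhds hupf
      · exact Filter.Eventually.of_forall fun t => sq_nonneg _
      · apply Filter.Eventually.of_forall
        intro t
        have hle : δ * (x t i) ^ 2 ≤ V t := by
          have h1 : 0 ≤ (u t) ^ 2 := sq_nonneg _
          have h2 : 0 ≤ (w t) ^ 2 := sq_nonneg _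
          have h3 : 0 ≤ δ * (x t 0) ^ 2 := by positivity
          have h4 : 0 ≤ δ * (x t 1) ^ 2 := by positivity
          simp only [hV]
          fin_cases i <;> simp <;> nlinarith
        calc (x t i) ^ 2 = δ⁻¹ * (δ * (x t i) ^ 2) := by field_simp
          _ ≤ δ⁻¹ * V t := mul_le_mul_of_nonneg_left hle (inv_nonneg.2 hδ.le)
    rw [tendsto_zero_iff_abs_tendsto_zero]
    have hs : Filter.Tendsto (fun t => Real.sqrt ((x t i) ^ 2)) Filter.atTop (nhds 0) := by
      have := (Real.continuous_sqrt.tendsto 0).comp hsq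
      simpa [Function.comp_def] using this
    simpa [Real.sqrt_sq_eq_abs, Function.comp_def] using hs
  rw [tendsto_pi_nhds]
  intro i
  simpa using hcomp i
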